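/- Let K be a field with algebraic closure K̄, and f₁, f₂ ∈ K[x] nonconstant. For a ∈ K̄ and i ∈ {1,2}, let m_i(a) be the multiplicity of a as a root of f_i(x) − f_i(a). Suppose A ⊆ K̄ is a nonempty finite set that is a union of f₁-fibers and a union of f₂-fibers, and ℓ : A → ℤ satisfies: (i) for each a ∈ A and i, ℓ(a)/m_i(a) is a positive integer; (ii) for a, b ∈ A with f_i(a) = f_i(b), ℓ(a)/m_i(a) = ℓ(b)/m_i(b). Then h := ∏_{a ∈ A} (x − a)^{ℓ(a)} is a common composite of f₁ and f₂ over K̄; consequently f₁ and f₂ have a common composite over K. -/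

import Mathlib

open Polynomial

lemma aux_exists_comp_eq {L : Type*} [Field L] [IsAlgClosed L] (F : L[X])
    (hF : F.natDegree ≠ 0) (m : L → ℕ)
    (hm : ∀ a, m a = (F - C (F.eval a)).rootMultiplicity a)
    (A : Finset L) (hA : A.Nonempty)
    (hfib : ∀ a ∈ A, ∀ b : L, F.eval b = F.eval a → b ∈ A)
    (ℓ : L → ℤ) (hpos : ∀ a ∈ A, 0 < ℓ a)
    (hdvd : ∀ a ∈ A, (m a : ℤ) ∣ ℓ a)
    (hcons : ∀ a ∈ A, ∀ b ∈ A, F.eval a = F.eval b → ℓ a * (m b : ℤ) = ℓ b * (m a : ℤ)) :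
    ∃ g : L[X], g.natDegree ≠ 0 ∧ g.comp F = ∏ a ∈ A, (X - C a) ^ (ℓ a).toNat := by
  classical
  have hF0 : F ≠ 0 := fun h => hF (by simp [h])
  set c := F.leadingCoeff with hcdef
  have hc0 : c ≠ 0 := leadingCoeff_ne_zero.mpr hF0
  set B := A.image F.eval with hBdef
  have hselx : ∀ t : L, ∃ a : L, t ∈ B → a ∈ A ∧ F.eval a = t := by
    intro t
    by_cases h : t ∈ B
    · obtain ⟨a, ha, hat⟩ := Finset.mem_image.mp h
      exact ⟨a, fun _ => ⟨ha, hat⟩⟩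
    · exact ⟨0, fun ht => absurd ht h⟩
  choose sel hsel using hselx
  -- basic facts
  have hsub0 : ∀ t : L, F - C t ≠ 0 := by
    intro t h
    have : F = C t := by linear_combination (norm := ring_nf) h
    exact hF (by rw [this]; simp)
  have hmpos : ∀ a ∈ A, 0 < m a := by
    intro a ha
    rw [hm]
    exact (rootMultiplicity_pos (hsub0 _)).mpr (by simp [IsRoot])
  set q : L → ℤ := fun t => ℓ (sel t) / (m (sel t) : ℤ) with hqdef
  set k : L → ℕ := fun t => (q t).toNat with hkdef
  have hq : ∀ t ∈ B, (m (sel t) : ℤ) * q t = ℓ (sel t) := by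
    intro t ht
    exact Int.mul_ediv_cancel' (hdvd _ (hsel t ht).1)
  have hqpos : ∀ t ∈ B, 0 < q t := by
    intro t ht
    have h1 := hq t ht
    have h2 := hpos _ (hsel t ht).1
    have h3 := hmpos _ (hsel t ht).1
    nlinarith [h1, h2, h3]
  have hkpos : ∀ t ∈ B, 0 < k t := by
    intro t ht
    have := hqpos t ht
    simp only [hkdef]
    omega
  -- ℓ b = q t * m b for b in the fiber of t
  have hℓ : ∀ t ∈ B, ∀ b ∈ A, F.eval b = t → ℓ b = q t * (m b : ℤ) := by
    intro t ht b hb hbt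
    have hselA := (hsel t ht).1
    have hselE := (hsel t ht).2
    have hc := hcons (sel t) hselA b hb (by rw [hselE, hbt])
    have hmne : ((m (sel t) : ℤ)) ≠ 0 := by
      exact_mod_cast (hmpos _ hselA).ne'
    apply mul_left_cancel₀ hmne
    rw [mul_comm (m (sel t) : ℤ) (ℓ b), ← hc, ← hq t ht]
    ring
  have hℓtoNat : ∀ t ∈ B, ∀ b ∈ A, F.eval b = t → (ℓ b).toNat = m b * k t := by
    intro t ht b hb hbt
    have h := hℓ t ht b hb hbt
    have hq' := (hqpos t ht).le
    have : ℓ b = ((m b * k t : ℕ) : ℤ) := by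
      push_cast [hkdef, Int.toNat_of_nonneg hq']
      rw [h]; ring
    rw [this, Int.toNat_natCast]
  -- fiber factorization
  have hfiber : ∀ t ∈ B,
      C c * ∏ b ∈ A.filter (fun b => F.eval b = t), (X - C b) ^ m b = F - C t := by
    intro t ht
    have hp0 : F - C t ≠ 0 := hsub0 t
    have hsplits : Splits (F - C t) := IsAlgClosed.splits _
    have hplc : (F - C t).leadingCoeff = c := by
      have hnd : (F - C t).natDegree = F.natDegree := natDegree_sub_C
      rw [leadingCoeff, hnd, coeff_sub, coeff_C, if_neg hF, sub_zero]
      rfl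
    have hfac := hsplits.eq_prod_roots
    rw [hplc] at hfac
    have hms : ((F - C t).roots.map fun a => X - C a).prod =
        ∏ b ∈ (F - C t).roots.toFinset, (X - C b) ^ (F - C t).roots.count b :=
      Finset.prod_multiset_map_count _ _
    have hset : (F - C t).roots.toFinset = A.filter (fun b => F.eval b = t) := by
      ext b
      simp only [Multiset.mem_toFinset, mem_roots hp0, IsRoot, eval_sub, eval_C,
        sub_eq_zero, Finset.mem_filter]
      constructor
      · intro h
        exact ⟨hfib (sel t) (hsel t ht).1 b (by rw [h, (hsel t ht).2]), h⟩
      · exact fun h => h.2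
    have hcnt : ∀ b ∈ A.filter (fun b => F.eval b = t),
        (F - C t).roots.count b = m b := by
      intro b hb
      obtain ⟨hbA, hbt⟩ := Finset.mem_filter.mp hb
      rw [count_roots, hm, hbt]
    rw [hms, hset, Finset.prod_congr rfl (fun b hb => by rw [hcnt b hb])] at hfac
    exact hfac.symm
  -- the polynomial g
  set N := ∑ t ∈ B, k t with hNdef
  refine ⟨C ((c ^ N)⁻¹) * ∏ t ∈ B, (X - C t) ^ k t, ?_, ?_⟩
  · -- natDegree ≠ 0
    have hmono : ∀ t ∈ B, ((X - C t) ^ k t).Monic :=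
      fun t _ => (monic_X_sub_C t).pow _
    have hdeg : (C ((c ^ N)⁻¹) * ∏ t ∈ B, (X - C t) ^ k t).natDegree = N := by
      rw [natDegree_C_mul (inv_ne_zero (pow_ne_zero _ hc0)),
        natDegree_prod_of_monic _ _ hmono]
      simp [natDegree_pow, natDegree_X_sub_C, hNdef]
    rw [hdeg, hNdef]
    have hBne : B.Nonempty := hA.image _
    obtain ⟨t0, ht0⟩ := hBne
    intro h
    have := Finset.sum_eq_zero_iff.mp h t0 ht0
    exact (hkpos t0 ht0).ne' this
  · -- comp computation
    have hcomp1 : (C ((c ^ N)⁻¹) * ∏ t ∈ B, (X - C t) ^ k t).comp F =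
        C ((c ^ N)⁻¹) * ∏ t ∈ B, (F - C t) ^ k t := by
      rw [mul_comp, C_comp]
      congr 1
      rw [Polynomial.comp, eval₂_finset_prod]
      exact Finset.prod_congr rfl fun t _ => by
        rw [← Polynomial.comp, pow_comp, sub_comp, X_comp, C_comp]
    rw [hcomp1]
    have hstep : ∀ t ∈ B, (F - C t) ^ k t =
        C (c ^ k t) * ∏ b ∈ A.filter (fun b => F.eval b = t), (X - C b) ^ (ℓ b).toNat := by
      intro t ht
      rw [← hfiber t ht, mul_pow, ← Finset.prod_pow, map_pow]
      congr 1
      refine Finset.prod_congr rfl fun b hb => ?_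
      obtain ⟨hbA, hbt⟩ := Finset.mem_filter.mp hb
      rw [← pow_mul, ← hℓtoNat t ht b hbA hbt]
    rw [Finset.prod_congr rfl hstep, Finset.prod_mul_distrib, ← map_prod,
      Finset.prod_pow_eq_pow_sum, ← hNdef, ← mul_assoc, ← map_mul,
      inv_mul_cancel₀ (pow_ne_zero _ hc0), map_one, one_mul]
    exact Finset.prod_fiberwise_of_maps_to (fun a ha => Finset.mem_image_of_mem _ ha) _


-- a K-linear functional on L with θ 1 = 1
lemma aux_exists_functional (K L : Type*) [Field K] [Field L] [Algebra K L] :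
    ∃ θ : L →ₗ[K] K, θ 1 = 1 := by
  have hs : LinearIndepOn K id ({1} : Set L) :=
    (linearIndepOn_singleton_iff K).mpr one_ne_zero
  set b := Module.Basis.extend hs with hb
  have h1 : (1 : L) ∈ hs.extend (Set.subset_univ _) :=
    hs.subset_extend _ rfl
  refine ⟨b.coord ⟨1, h1⟩, ?_⟩
  have h2 : b ⟨1, h1⟩ = (1 : L) := Module.Basis.extend_apply_self hs ⟨1, h1⟩
  have h3 := b.repr_self ⟨1, h1⟩
  rw [h2] at h3
  rw [Module.Basis.coord_apply, h3]
  simp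

lemma aux_descend {K L : Type*} [Field K] [Field L] [Algebra K L] {ι : Type*} [Fintype ι]
    (P : ι → K[X]) (x : ι → L) (j : ι) (hxj : x j ≠ 0)
    (h : ∑ s, x s • (P s).map (algebraMap K L) = 0) :
    ∃ y : ι → K, y j = 1 ∧ ∑ s, y s • P s = 0 := by
  obtain ⟨θ, hθ⟩ := aux_exists_functional K L
  set x' : ι → L := fun s => (x j)⁻¹ * x s with hx'
  have h' : ∑ s, x' s • (P s).map (algebraMap K L) = 0 := by
    simp only [hx', mul_smul, ← Finset.smul_sum, h, smul_zero]
  refine ⟨fun s => θ (x' s), by simp [hx', inv_mul_cancel₀ hxj, hθ], ?_⟩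
  ext r
  have hcr := congrArg (fun p => Polynomial.coeff p r) h'
  simp only [Polynomial.finset_sum_coeff, Polynomial.coeff_smul, Polynomial.coeff_map,
    Polynomial.coeff_zero, smul_eq_mul] at hcr
  have : ∑ s, ((P s).coeff r) • x' s = 0 := by
    rw [← hcr]
    exact Finset.sum_congr rfl fun s _ => by
      rw [Algebra.smul_def, mul_comm]
  have happ := congrArg θ this
  rw [map_sum, map_zero] at happ
  simp only [map_smul] at happ
  simp only [Polynomial.finset_sum_coeff, Polynomial.coeff_smul, Polynomial.coeff_zero,
    smul_eq_mul]
  rw [← happ]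
  exact Finset.sum_congr rfl fun s _ => by rw [smul_eq_mul, mul_comm]

-- helper: comp as a range sum
lemma aux_comp_sum {R : Type*} [CommSemiring R] (w G : R[X]) (D : ℕ) (hw : w.natDegree ≤ D) :
    w.comp G = ∑ i ∈ Finset.range (D + 1), w.coeff i • G ^ i := by
  rw [comp_eq_sum_left, Polynomial.sum_over_range' w (by simp) (D + 1) (by omega)]
  exact Finset.sum_congr rfl fun i _ => (Polynomial.smul_eq_C_mul _).symm

-- helper: coeff of such a sum
lemma aux_coeff_sum {R : Type*} [Semiring R] (n : ℕ) (a : Fin n → R) (r : ℕ) :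
    (∑ i : Fin n, C (a i) * X ^ ((i : ℕ) + 1)).coeff r =
      if h : 1 ≤ r ∧ r ≤ n then a ⟨r - 1, by omega⟩ else 0 := by
  rw [finset_sum_coeff]
  split_ifs with h
  · rw [Finset.sum_eq_single_of_mem (⟨r - 1, by omega⟩ : Fin n) (Finset.mem_univ _)]
    · rw [coeff_C_mul, coeff_X_pow, if_pos (by show r = r - 1 + 1; omega), mul_one]
    · intro b _ hb
      rw [coeff_C_mul, coeff_X_pow, if_neg, mul_zero]
      intro hrb
      apply hb
      apply Fin.ext
      show (b : ℕ) = r - 1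
      omega
  · apply Finset.sum_eq_zero
    intro b _
    rw [coeff_C_mul, coeff_X_pow, if_neg (by omega), mul_zero]

lemma aux_descend_poly {K L : Type*} [Field K] [Field L] [Algebra K L]
    (f₁ f₂ : K[X]) (hf₁ : f₁.natDegree ≠ 0) (hf₂ : f₂.natDegree ≠ 0)
    (g₁ g₂ : L[X]) (hg₁ : g₁.natDegree ≠ 0)
    (hcomp : g₁.comp (f₁.map (algebraMap K L)) = g₂.comp (f₂.map (algebraMap K L))) :
    ∃ u v : K[X], u.natDegree ≠ 0 ∧ v.natDegree ≠ 0 ∧ u.comp f₁ = v.comp f₂ := by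
  classical
  set φ := algebraMap K L
  set F₁ := f₁.map φ
  set F₂ := f₂.map φ
  set u' := g₁ - C (g₁.coeff 0) with hu'def
  set v' := g₂ - C (g₁.coeff 0) with hv'def
  have hu'comp : u'.comp F₁ = v'.comp F₂ := by
    rw [hu'def, hv'def, sub_comp, sub_comp, C_comp, C_comp, hcomp]
  have hu'c0 : u'.coeff 0 = 0 := by simp [hu'def]
  set d₁ := g₁.natDegree with hd₁
  set d₂ := g₂.natDegree with hd₂
  have hu'nd : u'.natDegree = d₁ := natDegree_sub_C
  have hv'nd : v'.natDegree = d₂ := natDegree_sub_C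
  have hu'ne : u' ≠ 0 := by
    intro h
    rw [h] at hu'nd
    exact hg₁ (by rw [← hu'nd]; simp)
  -- the linear system
  set P : Fin d₁ ⊕ Fin (d₂ + 1) → K[X] :=
    Sum.elim (fun i => f₁ ^ ((i : ℕ) + 1)) (fun j => f₂ ^ (j : ℕ)) with hP
  set x : Fin d₁ ⊕ Fin (d₂ + 1) → L :=
    Sum.elim (fun i => u'.coeff ((i : ℕ) + 1)) (fun j => -(v'.coeff (j : ℕ))) with hx
  have hd₁pos : 0 < d₁ := Nat.pos_of_ne_zero hg₁
  set j₀ : Fin d₁ ⊕ Fin (d₂ + 1) := Sum.inl ⟨d₁ - 1, by omega⟩ with hj₀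
  have hxj : x j₀ ≠ 0 := by
    have : d₁ - 1 + 1 = d₁ := by omega
    simp only [hx, hj₀, Sum.elim_inl, this]
    rw [← hu'nd]
    exact leadingCoeff_ne_zero.mpr hu'ne
  have hsum : ∑ s, x s • (P s).map φ = 0 := by
    rw [Fintype.sum_sum_type]
    have e1 : ∀ i : Fin d₁, x (Sum.inl i) • (P (Sum.inl i)).map φ =
        u'.coeff ((i : ℕ) + 1) • F₁ ^ ((i : ℕ) + 1) := by
      intro i; simp [hx, hP, Polynomial.map_pow, F₁]
    have e2 : ∀ j : Fin (d₂ + 1), x (Sum.inr j) • (P (Sum.inr j)).map φ =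
        -(v'.coeff (j : ℕ) • F₂ ^ (j : ℕ)) := by
      intro j; simp [hx, hP, Polynomial.map_pow, F₂]
    rw [Finset.sum_congr rfl (fun i _ => e1 i), Finset.sum_congr rfl (fun j _ => e2 j),
      Finset.sum_neg_distrib]
    have hu'sum : u'.comp F₁ = ∑ i : Fin d₁, u'.coeff ((i : ℕ) + 1) • F₁ ^ ((i : ℕ) + 1) := by
      rw [aux_comp_sum u' F₁ d₁ (le_of_eq hu'nd), Finset.sum_range_succ']
      simp [hu'c0, ← Finset.sum_range fun i => u'.coeff (i + 1) • F₁ ^ (i + 1)]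
    have hv'sum : v'.comp F₂ = ∑ j : Fin (d₂ + 1), v'.coeff (j : ℕ) • F₂ ^ (j : ℕ) := by
      rw [aux_comp_sum v' F₂ d₂ (le_of_eq hv'nd)]
      exact Finset.sum_range fun i => v'.coeff i • F₂ ^ i
    rw [← hu'sum, ← hv'sum, hu'comp, add_neg_cancel]
  obtain ⟨y, hyj, hy⟩ := aux_descend P x j₀ hxj hsum
  set u : K[X] := ∑ i : Fin d₁, C (y (Sum.inl i)) * X ^ ((i : ℕ) + 1) with hu
  set v : K[X] := -∑ j : Fin (d₂ + 1), C (y (Sum.inr j)) * X ^ (j : ℕ) with hv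
  have hucomp : u.comp f₁ = ∑ i : Fin d₁, y (Sum.inl i) • f₁ ^ ((i : ℕ) + 1) := by
    rw [hu, Polynomial.comp, eval₂_finset_sum]
    exact Finset.sum_congr rfl fun i _ => by
      rw [← Polynomial.comp, mul_comp, C_comp, X_pow_comp, ← Polynomial.smul_eq_C_mul]
  have hvcomp : v.comp f₂ = -∑ j : Fin (d₂ + 1), y (Sum.inr j) • f₂ ^ (j : ℕ) := by
    rw [hv, neg_comp, Polynomial.comp, eval₂_finset_sum]
    congr 1
    exact Finset.sum_congr rfl fun j _ => by
      rw [← Polynomial.comp, mul_comp, C_comp, X_pow_comp, ← Polynomial.smul_eq_C_mul]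
  have hcompeq : u.comp f₁ = v.comp f₂ := by
    rw [hucomp, hvcomp]
    rw [Fintype.sum_sum_type] at hy
    simp only [hP, Sum.elim_inl, Sum.elim_inr] at hy
    linear_combination hy
  have hud₁ : u.coeff d₁ = 1 := by
    rw [hu, aux_coeff_sum]
    rw [dif_pos ⟨by omega, le_refl _⟩]
    convert hyj using 2
  have hund : u.natDegree ≠ 0 := by
    intro h
    have := eq_C_of_natDegree_eq_zero h
    have hc0 : u.coeff 0 = 0 := by
      rw [hu, aux_coeff_sum, dif_neg (by omega)]
    rw [hc0, map_zero] at this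
    rw [this, coeff_zero] at hud₁
    exact one_ne_zero hud₁.symm
  refine ⟨u, v, hund, ?_, hcompeq⟩
  intro h
  have h1 : (u.comp f₁).natDegree = u.natDegree * f₁.natDegree := natDegree_comp
  have h2 : (v.comp f₂).natDegree = v.natDegree * f₂.natDegree := natDegree_comp
  rw [hcompeq, h2, h, zero_mul] at h1
  exact Nat.mul_ne_zero hund hf₁ h1.symm


theorem stmt_16 (K : Type*) [Field K] (f₁ f₂ : K[X])
    (hf₁ : f₁.natDegree ≠ 0) (hf₂ : f₂.natDegree ≠ 0)
    (F₁ F₂ : (AlgebraicClosure K)[X])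
    (hF₁ : F₁ = f₁.map (algebraMap K (AlgebraicClosure K)))
    (hF₂ : F₂ = f₂.map (algebraMap K (AlgebraicClosure K)))
    (m₁ m₂ : AlgebraicClosure K → ℕ)
    (hm₁ : ∀ a, m₁ a = (F₁ - C (F₁.eval a)).rootMultiplicity a)
    (hm₂ : ∀ a, m₂ a = (F₂ - C (F₂.eval a)).rootMultiplicity a)
    (A : Finset (AlgebraicClosure K)) (hA : A.Nonempty)
    (hfib₁ : ∀ a ∈ A, ∀ b : AlgebraicClosure K, F₁.eval b = F₁.eval a → b ∈ A)
    (hfib₂ : ∀ a ∈ A, ∀ b : AlgebraicClosure K, F₂.eval b = F₂.eval a → b ∈ A)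
    (ℓ : AlgebraicClosure K → ℤ)
    (hpos : ∀ a ∈ A, 0 < ℓ a)
    (hdvd₁ : ∀ a ∈ A, (m₁ a : ℤ) ∣ ℓ a) (hdvd₂ : ∀ a ∈ A, (m₂ a : ℤ) ∣ ℓ a)
    (hcons₁ : ∀ a ∈ A, ∀ b ∈ A, F₁.eval a = F₁.eval b → ℓ a * (m₁ b : ℤ) = ℓ b * (m₁ a : ℤ))
    (hcons₂ : ∀ a ∈ A, ∀ b ∈ A, F₂.eval a = F₂.eval b → ℓ a * (m₂ b : ℤ) = ℓ b * (m₂ a : ℤ)) :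
    (∃ g₁ g₂ : (AlgebraicClosure K)[X], g₁.natDegree ≠ 0 ∧ g₂.natDegree ≠ 0 ∧
      g₁.comp F₁ = ∏ a ∈ A, (X - C a) ^ (ℓ a).toNat ∧
      g₂.comp F₂ = ∏ a ∈ A, (X - C a) ^ (ℓ a).toNat) ∧
    ∃ u v : K[X], u.natDegree ≠ 0 ∧ v.natDegree ≠ 0 ∧ u.comp f₁ = v.comp f₂ := by
  have hF₁d : F₁.natDegree ≠ 0 := by
    rw [hF₁, natDegree_map]; exact hf₁
  have hF₂d : F₂.natDegree ≠ 0 := by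
    rw [hF₂, natDegree_map]; exact hf₂
  obtain ⟨g₁, hg₁d, hg₁⟩ :=
    aux_exists_comp_eq F₁ hF₁d m₁ hm₁ A hA hfib₁ ℓ hpos hdvd₁ hcons₁
  obtain ⟨g₂, hg₂d, hg₂⟩ :=
    aux_exists_comp_eq F₂ hF₂d m₂ hm₂ A hA hfib₂ ℓ hpos hdvd₂ hcons₂
  refine ⟨⟨g₁, g₂, hg₁d, hg₂d, hg₁, hg₂⟩, ?_⟩
  exact aux_descend_poly f₁ f₂ hf₁ hf₂ g₁ g₂ hg₁d
    (by rw [← hF₁, ← hF₂, hg₁, hg₂])
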